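/- For every α ∈ [0,1] and every y ∈ (0,1], the inequality (1 − y/2)(1 − y)^α + (1 + y/2)(1 + y)^α − 2 ≤ α² y² holds. -/

import Mathlib

open Real Set

lemma lb_inv_minus' {p y : ℝ} (hp1 : 1 ≤ p) (hp2 : p ≤ 2) (hy0 : 0 ≤ y) (hy1 : y < 1) :
    1 + p * y ≤ (1 - y) ^ (-p : ℝ) := by
  have h1 : (0:ℝ) < 1 - y := by linarith
  have hpow : (0:ℝ) < (1 - y) ^ (p : ℝ) := Real.rpow_pos_of_pos h1 p
  have hpy : (0:ℝ) ≤ p * y := mul_nonneg (by linarith) hy0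
  have hb : (1 - y) ^ (p - 1 : ℝ) ≤ 1 - (p - 1) * y := by
    have := rpow_one_add_le_one_add_mul_self (s := -y) (by linarith) (p := p - 1)
      (by linarith) (by linarith)
    rw [show (1 : ℝ) + -y = 1 - y by ring] at this
    linarith
  have hsplit : (1 - y) ^ (p : ℝ) = (1 - y) ^ (p - 1 : ℝ) * (1 - y) := by
    have h := Real.rpow_add h1 (p - 1) 1
    rw [Real.rpow_one] at h
    rw [show p - 1 + 1 = p by ring] at h
    exact h
  have hkey : (1 + p * y) * (1 - y) ^ (p : ℝ) ≤ 1 := by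
    rw [hsplit]
    have hc : (0:ℝ) ≤ (1 + p * y) * (1 - y) := mul_nonneg (by linarith) h1.le
    have h2 : (1 - y) ^ (p - 1 : ℝ) * ((1 + p * y) * (1 - y)) ≤
        (1 - (p - 1) * y) * ((1 + p * y) * (1 - y)) := mul_le_mul_of_nonneg_right hb hc
    have h3 : (1 - (p - 1) * y) * ((1 + p * y) * (1 - y)) ≤ 1 := by
      have haux : p * (p - 1) * y ≤ p + (p - 1) ^ 2 := by nlinarith
      nlinarith [sq_nonneg y, mul_nonneg (sq_nonneg y) (by nlinarith : (0:ℝ) ≤ p + (p-1)^2 - p*(p-1)*y)]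
    nlinarith [h2, h3]
  rw [Real.rpow_neg h1.le, ← one_div, le_div_iff₀ hpow]
  linarith [hkey]

lemma ub_inv_plus' {p y : ℝ} (hp1 : 1 ≤ p) (hp2 : p ≤ 2) (hy0 : 0 ≤ y) :
    1 - p * y ≤ (1 + y) ^ (-p : ℝ) := by
  have h1 : (0:ℝ) < 1 + y := by linarith
  have hpow : (0:ℝ) < (1 + y) ^ (p : ℝ) := Real.rpow_pos_of_pos h1 p
  rcases le_or_gt (1 - p * y) 0 with h | h
  · exact h.trans (le_of_lt (Real.rpow_pos_of_pos h1 _))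
  have hb : (1 + y) ^ (p - 1 : ℝ) ≤ 1 + (p - 1) * y :=
    rpow_one_add_le_one_add_mul_self (by linarith) (by linarith) (by linarith)
  have hsplit : (1 + y) ^ (p : ℝ) = (1 + y) ^ (p - 1 : ℝ) * (1 + y) := by
    have hh := Real.rpow_add h1 (p - 1) 1
    rw [Real.rpow_one] at hh
    rw [show p - 1 + 1 = p by ring] at hh
    exact hh
  have hkey : (1 - p * y) * (1 + y) ^ (p : ℝ) ≤ 1 := by
    rw [hsplit]
    have hc : (0:ℝ) ≤ (1 - p * y) * (1 + y) := mul_nonneg h.le h1.le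
    have h2 : (1 + y) ^ (p - 1 : ℝ) * ((1 - p * y) * (1 + y)) ≤
        (1 + (p - 1) * y) * ((1 - p * y) * (1 + y)) := mul_le_mul_of_nonneg_right hb hc
    have h3 : (1 + (p - 1) * y) * ((1 - p * y) * (1 + y)) ≤ 1 := by
      nlinarith [mul_nonneg (sq_nonneg y) (by nlinarith : (0:ℝ) ≤ p^2 - p + 1),
        mul_nonneg (mul_nonneg (by linarith : (0:ℝ) ≤ p) (by linarith : (0:ℝ) ≤ p - 1))
          (mul_nonneg (mul_nonneg hy0 hy0) hy0)]
    nlinarith [h2, h3]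
  rw [Real.rpow_neg h1.le, ← one_div, le_div_iff₀ hpow]
  linarith [hkey]

lemma hd_plus (p t : ℝ) (ht : (0:ℝ) < 1 + t) :
    HasDerivAt (fun s : ℝ => (1 + s) ^ (p : ℝ)) (p * (1 + t) ^ (p - 1 : ℝ)) t := by
  have hinner : HasDerivAt (fun s : ℝ => 1 + s) 1 t := (hasDerivAt_id t).const_add 1
  have h := hinner.rpow_const (p := p) (Or.inl (ne_of_gt ht))
  simpa using h

lemma hd_minus (p t : ℝ) (ht : (0:ℝ) < 1 - t) :
    HasDerivAt (fun s : ℝ => (1 - s) ^ (p : ℝ)) (-(p * (1 - t) ^ (p - 1 : ℝ))) t := by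
  have hinner : HasDerivAt (fun s : ℝ => 1 - s) (-1) t := by
    simpa using (hasDerivAt_id' t).const_sub (1:ℝ)
  have h := hinner.rpow_const (p := p) (Or.inl (ne_of_gt ht))
  convert h using 1
  ring

lemma nonneg_of_deriv_aux (f g : ℝ → ℝ) {b : ℝ} (hb : 0 ≤ b)
    (hd : ∀ t ∈ Set.Icc (0:ℝ) b, HasDerivAt f (g t) t)
    (h0 : f 0 = 0) (hg : ∀ t ∈ Set.Icc (0:ℝ) b, 0 ≤ g t) : 0 ≤ f b := by
  have hmono : MonotoneOn f (Set.Icc 0 b) := by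
    apply monotoneOn_of_deriv_nonneg (convex_Icc 0 b)
    · exact fun t ht => (hd t ht).continuousAt.continuousWithinAt
    · intro t ht
      have ht' : t ∈ Set.Icc (0:ℝ) b := interior_subset ht
      exact (hd t ht').differentiableAt.differentiableWithinAt
    · intro t ht
      have ht' : t ∈ Set.Icc (0:ℝ) b := interior_subset ht
      rw [(hd t ht').deriv]
      exact hg t ht'
  have := hmono (Set.left_mem_Icc.2 hb) (Set.right_mem_Icc.2 hb) hb
  linarith [this, h0.ge, h0.le]

lemma T2 {α y : ℝ} (hα0 : 0 ≤ α) (hα1 : α ≤ 1) (hy0 : 0 ≤ y) :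
    (1 + y) ^ (α : ℝ) ≤ 1 + α*y - α*(1-α)*y^2/2 + α*(1-α)*(2-α)*y^3/6 := by
  have inner : ∀ b : ℝ, 0 ≤ b →
      0 ≤ α - α*(1-α)*b + α*(1-α)*(2-α)*b^2/2 - α*(1+b)^(α-1:ℝ) := by
    intro b hb
    apply nonneg_of_deriv_aux _
      (fun t => -(α*(1-α)) + α*(1-α)*(2-α)*t + α*(1-α)*(1+t)^(α-2:ℝ)) hb
    · intro t ht
      have h1 : (0:ℝ) < 1 + t := by linarith [ht.1]
      have hr := (hd_plus (α-1) t h1).const_mul α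
      have h2' : HasDerivAt (fun s : ℝ => s^2) (2*t) t := by simpa using hasDerivAt_pow 2 t
      have H := (((hasDerivAt_const t α).sub ((hasDerivAt_id t).const_mul (α*(1-α)))).add
        ((h2'.const_mul (α*(1-α)*(2-α))).div_const 2)).sub hr
      have heq : (fun t : ℝ => α - α*(1-α)*t + α*(1-α)*(2-α)*t^2/2 - α*(1+t)^(α-1:ℝ))
          = (fun t : ℝ => (α - α*(1-α)*t + α*(1-α)*(2-α)*t^2/2) - α*(1+t)^(α-1:ℝ)) := by
        funext s; ring
      rw [heq]
      refine H.congr_deriv ?_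
      rw [show α - 1 - 1 = α - 2 by ring]
      ring
    · norm_num
    · intro t ht
      have h1 : (0:ℝ) < 1 + t := by linarith [ht.1]
      have hB : 1 - (2-α)*t ≤ (1+t)^(α-2:ℝ) := by
        have := ub_inv_plus' (p := 2-α) (by linarith) (by linarith) ht.1
        rwa [show -(2-α) = α-2 by ring] at this
      have hβ : 0 ≤ α*(1-α) := mul_nonneg hα0 (by linarith)
      nlinarith [mul_le_mul_of_nonneg_left hB hβ]
  have outer : 0 ≤ 1 + α*y - α*(1-α)*y^2/2 + α*(1-α)*(2-α)*y^3/6 - (1+y)^(α:ℝ) := by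
    apply nonneg_of_deriv_aux _
      (fun t => α - α*(1-α)*t + α*(1-α)*(2-α)*t^2/2 - α*(1+t)^(α-1:ℝ)) hy0
    · intro t ht
      have h1 : (0:ℝ) < 1 + t := by linarith [ht.1]
      have hr := hd_plus α t h1
      have h2' : HasDerivAt (fun s : ℝ => s^2) (2*t) t := by simpa using hasDerivAt_pow 2 t
      have h3' : HasDerivAt (fun s : ℝ => s^3) (3*t^2) t := by
        simpa using hasDerivAt_pow 3 t
      have H := (((((hasDerivAt_const t (1:ℝ)).add ((hasDerivAt_id t).const_mul α)).sub
        ((h2'.const_mul (α*(1-α))).div_const 2)).add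
        ((h3'.const_mul (α*(1-α)*(2-α))).div_const 6)).sub hr)
      have heq : (fun t : ℝ => 1 + α*t - α*(1-α)*t^2/2 + α*(1-α)*(2-α)*t^3/6 - (1+t)^(α:ℝ))
          = (fun t : ℝ => (((1 + α*t) - α*(1-α)*t^2/2) + α*(1-α)*(2-α)*t^3/6) - (1+t)^(α:ℝ)) := by
        funext s; ring
      rw [heq]
      refine H.congr_deriv ?_
      try ring
    · norm_num
    · intro t ht
      exact inner t ht.1
  linarith [outer]

lemma T1 {α y : ℝ} (hα0 : 0 ≤ α) (hα1 : α ≤ 1) (hy0 : 0 ≤ y) (hy1 : y < 1) :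
    (1 - y) ^ (α : ℝ) ≤ 1 - α*y - α*(1-α)*y^2/2 - α*(1-α)*(2-α)*y^3/6 := by
  have inner : ∀ b : ℝ, 0 ≤ b → b < 1 →
      0 ≤ -α - α*(1-α)*b - α*(1-α)*(2-α)*b^2/2 + α*(1-b)^(α-1:ℝ) := by
    intro b hb hb1
    apply nonneg_of_deriv_aux _
      (fun t => -(α*(1-α)) - α*(1-α)*(2-α)*t + α*(1-α)*(1-t)^(α-2:ℝ)) hb
    · intro t ht
      have h1 : (0:ℝ) < 1 - t := by linarith [ht.2]
      have hr := (hd_minus (α-1) t h1).const_mul α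
      have h2' : HasDerivAt (fun s : ℝ => s^2) (2*t) t := by simpa using hasDerivAt_pow 2 t
      have H := ((((hasDerivAt_const t (-α)).sub ((hasDerivAt_id t).const_mul (α*(1-α)))).sub
        ((h2'.const_mul (α*(1-α)*(2-α))).div_const 2)).add hr)
      have heq : (fun t : ℝ => -α - α*(1-α)*t - α*(1-α)*(2-α)*t^2/2 + α*(1-t)^(α-1:ℝ))
          = (fun t : ℝ => ((-α - α*(1-α)*t) - α*(1-α)*(2-α)*t^2/2) + α*(1-t)^(α-1:ℝ)) := by
        funext s; ring
      rw [heq]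
      refine H.congr_deriv ?_
      rw [show α - 1 - 1 = α - 2 by ring]
      ring
    · norm_num
    · intro t ht
      have ht1 : t < 1 := lt_of_le_of_lt ht.2 hb1
      have hB : 1 + (2-α)*t ≤ (1-t)^(α-2:ℝ) := by
        have := lb_inv_minus' (p := 2-α) (by linarith) (by linarith) ht.1 ht1
        rwa [show -(2-α) = α-2 by ring] at this
      have hβ : 0 ≤ α*(1-α) := mul_nonneg hα0 (by linarith)
      nlinarith [mul_le_mul_of_nonneg_left hB hβ]
  have outer : 0 ≤ 1 - α*y - α*(1-α)*y^2/2 - α*(1-α)*(2-α)*y^3/6 - (1-y)^(α:ℝ) := by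
    apply nonneg_of_deriv_aux _
      (fun t => -α - α*(1-α)*t - α*(1-α)*(2-α)*t^2/2 + α*(1-t)^(α-1:ℝ)) hy0
    · intro t ht
      have h1 : (0:ℝ) < 1 - t := by linarith [lt_of_le_of_lt ht.2 hy1]
      have hr := hd_minus α t h1
      have h2' : HasDerivAt (fun s : ℝ => s^2) (2*t) t := by simpa using hasDerivAt_pow 2 t
      have h3' : HasDerivAt (fun s : ℝ => s^3) (3*t^2) t := by simpa using hasDerivAt_pow 3 t
      have H := (((((hasDerivAt_const t (1:ℝ)).sub ((hasDerivAt_id t).const_mul α)).sub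
        ((h2'.const_mul (α*(1-α))).div_const 2)).sub
        ((h3'.const_mul (α*(1-α)*(2-α))).div_const 6)).sub hr)
      have heq : (fun t : ℝ => 1 - α*t - α*(1-α)*t^2/2 - α*(1-α)*(2-α)*t^3/6 - (1-t)^(α:ℝ))
          = (fun t : ℝ => (((1 - α*t) - α*(1-α)*t^2/2) - α*(1-α)*(2-α)*t^3/6) - (1-t)^(α:ℝ)) := by
        funext s; ring
      rw [heq]
      refine H.congr_deriv ?_
      try ring
    · norm_num
    · intro t ht
      exact inner t ht.1 (lt_of_le_of_lt ht.2 hy1)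
  linarith [outer]

set_option maxHeartbeats 1000000 in
lemma KEY {α y : ℝ} (hα0 : 0 ≤ α) (hα1 : α ≤ 1) (hy0 : 0 ≤ y) (hy1 : y < 1) :
    0 ≤ 2*α + (y*(1+α)/2 - α)*(1-y)^(α-2:ℝ) - (y*(1+α)/2 + α)*(1+y)^(α-2:ℝ) := by
  have h1m : (0:ℝ) < 1 - y := by linarith
  have h1p : (0:ℝ) < 1 + y := by linarith
  have hs0 : (0:ℝ) ≤ y*(1+α)/2 := by nlinarith [mul_nonneg hy0 (by linarith : (0:ℝ) ≤ 1+α)]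
  rcases le_or_gt α (y*(1+α)/2) with hcase | hcase
  · have hA : (1:ℝ) ≤ (1-y)^(α-2:ℝ) :=
      Real.one_le_rpow_of_pos_of_le_one_of_nonpos h1m (by linarith) (by linarith)
    have hB : (1+y)^(α-2:ℝ) ≤ 1 :=
      Real.rpow_le_one_of_one_le_of_nonpos (by linarith) (by linarith)
    have h1 := mul_le_mul_of_nonneg_left hA (sub_nonneg.2 hcase)
    have h2 := mul_le_mul_of_nonneg_left hB (by linarith : (0:ℝ) ≤ y*(1+α)/2 + α)
    nlinarith [h1, h2]
  · have e1 : (1-y)^(α-2:ℝ) = (1-y)^(α:ℝ) / (1-y)^2 := by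
      rw [show (α-2:ℝ) = α - ((2:ℕ):ℝ) by norm_num, Real.rpow_sub h1m, Real.rpow_natCast]
    have e2 : (1+y)^(α-2:ℝ) = (1+y)^(α:ℝ) / (1+y)^2 := by
      rw [show (α-2:ℝ) = α - ((2:ℕ):ℝ) by norm_num, Real.rpow_sub h1p, Real.rpow_natCast]
    rw [e1, e2]
    have hu : (0:ℝ) < (1-y)^2 := pow_pos h1m 2
    have hv : (0:ℝ) < (1+y)^2 := pow_pos h1p 2
    have ha := T1 hα0 hα1 hy0 hy1
    have hb := T2 hα0 hα1 hy0
    have h1 : (y*(1+α)/2 - α)*(1 - α*y - α*(1-α)*y^2/2 - α*(1-α)*(2-α)*y^3/6)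
        ≤ (y*(1+α)/2 - α)*(1-y)^(α:ℝ) := mul_le_mul_of_nonpos_left ha (by linarith)
    have h2 : (y*(1+α)/2 + α)*(1+y)^(α:ℝ)
        ≤ (y*(1+α)/2 + α)*(1 + α*y - α*(1-α)*y^2/2 + α*(1-α)*(2-α)*y^3/6) :=
      mul_le_mul_of_nonneg_left hb (by linarith)
    have hP : 0 ≤ 2*α*((1-y)^2*(1+y)^2)
        + (y*(1+α)/2 - α)*(1 - α*y - α*(1-α)*y^2/2 - α*(1-α)*(2-α)*y^3/6)*(1+y)^2
        - (y*(1+α)/2 + α)*(1 + α*y - α*(1-α)*y^2/2 + α*(1-α)*(2-α)*y^3/6)*(1-y)^2 := by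
      have hfact : 2*α*((1-y)^2*(1+y)^2)
          + (y*(1+α)/2 - α)*(1 - α*y - α*(1-α)*y^2/2 - α*(1-α)*(2-α)*y^3/6)*(1+y)^2
          - (y*(1+α)/2 + α)*(1 + α*y - α*(1-α)*y^2/2 + α*(1-α)*(2-α)*y^3/6)*(1-y)^2
          = y^2*(1-α)*(2-α)*((1-α)*(1-α*y^2/3) + α*(1+α)*(y^2*(1-y^2))/6) := by ring
      rw [hfact]
      have hy2 : y^2 ≤ 1 := by nlinarith
      have hay2 : α*y^2 ≤ 1 := by nlinarith [mul_nonneg hα0 (sq_nonneg y)]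
      have t1 : (0:ℝ) ≤ (1-α)*(1-α*y^2/3) := mul_nonneg (by linarith) (by linarith)
      have t2 : (0:ℝ) ≤ α*(1+α)*(y^2*(1-y^2))/6 := by
        have : (0:ℝ) ≤ y^2*(1-y^2) := mul_nonneg (sq_nonneg y) (by nlinarith)
        have : (0:ℝ) ≤ α*(1+α)*(y^2*(1-y^2)) := mul_nonneg (mul_nonneg hα0 (by linarith)) this
        linarith
      have := mul_nonneg (mul_nonneg (mul_nonneg (sq_nonneg y) (by linarith : (0:ℝ) ≤ 1-α))
        (by linarith : (0:ℝ) ≤ 2-α)) (by linarith : (0:ℝ) ≤ (1-α)*(1-α*y^2/3) + α*(1+α)*(y^2*(1-y^2))/6)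
      linarith [this]
    have m1 := mul_le_mul_of_nonneg_right h1 hv.le
    have m2 := mul_le_mul_of_nonneg_right h2 hu.le
    have main : 0 ≤ 2*α*((1-y)^2*(1+y)^2)
        + (y*(1+α)/2 - α)*(1-y)^(α:ℝ)*(1+y)^2
        - (y*(1+α)/2 + α)*(1+y)^(α:ℝ)*(1-y)^2 := by linarith [hP, m1, m2]
    have expand : 2*α + (y*(1+α)/2 - α)*((1-y)^(α:ℝ)/(1-y)^2) - (y*(1+α)/2 + α)*((1+y)^(α:ℝ)/(1+y)^2)
        = (2*α*((1-y)^2*(1+y)^2)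
        + (y*(1+α)/2 - α)*(1-y)^(α:ℝ)*(1+y)^2
        - (y*(1+α)/2 + α)*(1+y)^(α:ℝ)*(1-y)^2) / ((1-y)^2*(1+y)^2) := by
      field_simp
    rw [expand]
    exact div_nonneg main (by positivity)

set_option maxHeartbeats 1000000 in
lemma mainIneq {α y : ℝ} (hα0 : 0 ≤ α) (hα1 : α ≤ 1) (hy0 : 0 ≤ y) (hy1 : y < 1) :
    (1 - y/2)*(1-y)^(α:ℝ) + (1 + y/2)*(1+y)^(α:ℝ) - 2 ≤ α^2*y^2 := by
  have stepA : ∀ b : ℝ, 0 ≤ b → b < 1 →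
      0 ≤ 2*α^2*b + (1/2)*(1-b)^(α:ℝ) + α*((1-b/2)*(1-b)^(α-1:ℝ))
        - (1/2)*(1+b)^(α:ℝ) - α*((1+b/2)*(1+b)^(α-1:ℝ)) := by
    intro b hb hb1
    apply nonneg_of_deriv_aux _
      (fun t => α*(2*α + (t*(1+α)/2 - α)*(1-t)^(α-2:ℝ) - (t*(1+α)/2 + α)*(1+t)^(α-2:ℝ))) hb
    · intro t ht
      have h1m : (0:ℝ) < 1 - t := by linarith [lt_of_le_of_lt ht.2 hb1]
      have h1p : (0:ℝ) < 1 + t := by linarith [ht.1]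
      have hinm : HasDerivAt (fun s : ℝ => 1 - s/2) (-(1/2)) t := by
        simpa using ((hasDerivAt_id' t).div_const 2).const_sub (1:ℝ)
      have hinp : HasDerivAt (fun s : ℝ => 1 + s/2) (1/2) t := by
        simpa using ((hasDerivAt_id' t).div_const 2).const_add (1:ℝ)
      have H := (((((hasDerivAt_id t).const_mul (2*α^2)).add
          ((hd_minus α t h1m).const_mul (1/2))).add
          ((hinm.mul (hd_minus (α-1) t h1m)).const_mul α)).sub
          ((hd_plus α t h1p).const_mul (1/2))).sub
          ((hinp.mul (hd_plus (α-1) t h1p)).const_mul α)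
      have heq : (fun t : ℝ => 2*α^2*t + (1/2)*(1-t)^(α:ℝ) + α*((1-t/2)*(1-t)^(α-1:ℝ))
            - (1/2)*(1+t)^(α:ℝ) - α*((1+t/2)*(1+t)^(α-1:ℝ)))
          = (fun t : ℝ => ((((2*α^2*t) + (1/2)*(1-t)^(α:ℝ)) + α*((1-t/2)*(1-t)^(α-1:ℝ)))
            - (1/2)*(1+t)^(α:ℝ)) - α*((1+t/2)*(1+t)^(α-1:ℝ))) := by
        funext s; ring
      rw [heq]
      refine H.congr_deriv ?_
      have r1 : (1-t)^(α-1:ℝ) = (1-t)^(α-2:ℝ)*(1-t) := by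
        rw [← Real.rpow_add_one h1m.ne' (α-2)]
        congr 1; ring
      have r2 : (1+t)^(α-1:ℝ) = (1+t)^(α-2:ℝ)*(1+t) := by
        rw [← Real.rpow_add_one h1p.ne' (α-2)]
        congr 1; ring
      rw [show α-1-1 = α-2 by ring, r1, r2]
      ring
    · norm_num
    · intro t ht
      have ht1 : t < 1 := lt_of_le_of_lt ht.2 hb1
      exact mul_nonneg hα0 (KEY hα0 hα1 ht.1 ht1)
  have stepB : 0 ≤ 2 + α^2*y^2 - (1 - y/2)*(1-y)^(α:ℝ) - (1 + y/2)*(1+y)^(α:ℝ) := by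
    apply nonneg_of_deriv_aux _
      (fun t => 2*α^2*t + (1/2)*(1-t)^(α:ℝ) + α*((1-t/2)*(1-t)^(α-1:ℝ))
        - (1/2)*(1+t)^(α:ℝ) - α*((1+t/2)*(1+t)^(α-1:ℝ))) hy0
    · intro t ht
      have h1m : (0:ℝ) < 1 - t := by linarith [lt_of_le_of_lt ht.2 hy1]
      have h1p : (0:ℝ) < 1 + t := by linarith [ht.1]
      have hinm : HasDerivAt (fun s : ℝ => 1 - s/2) (-(1/2)) t := by
        simpa using ((hasDerivAt_id' t).div_const 2).const_sub (1:ℝ)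
      have hinp : HasDerivAt (fun s : ℝ => 1 + s/2) (1/2) t := by
        simpa using ((hasDerivAt_id' t).div_const 2).const_add (1:ℝ)
      have h2' : HasDerivAt (fun s : ℝ => s^2) (2*t) t := by simpa using hasDerivAt_pow 2 t
      have H := (((hasDerivAt_const t (2:ℝ)).add (h2'.const_mul (α^2))).sub
          (hinm.mul (hd_minus α t h1m))).sub (hinp.mul (hd_plus α t h1p))
      have heq : (fun t : ℝ => 2 + α^2*t^2 - (1 - t/2)*(1-t)^(α:ℝ) - (1 + t/2)*(1+t)^(α:ℝ))
          = (fun t : ℝ => ((2 + α^2*t^2) - (1 - t/2)*(1-t)^(α:ℝ)) - (1 + t/2)*(1+t)^(α:ℝ)) := by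
        funext s; ring
      rw [heq]
      refine H.congr_deriv ?_
      ring
    · norm_num
    · intro t ht
      exact stepA t ht.1 (lt_of_le_of_lt ht.2 hy1)
  linarith [stepB]

/-- For every `α ∈ [0,1]` and `y ∈ (0,1]`:
`(1 − y/2)(1 − y)^α + (1 + y/2)(1 + y)^α − 2 ≤ α² y²` (real powers). -/
theorem stmt4 (α : ℝ) (hα : α ∈ Set.Icc (0 : ℝ) 1) (y : ℝ) (hy : y ∈ Set.Ioc (0 : ℝ) 1) :
    (1 - y / 2) * (1 - y) ^ α + (1 + y / 2) * (1 + y) ^ α - 2 ≤ α ^ 2 * y ^ 2 := by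
  obtain ⟨hα0, hα1⟩ := hα
  obtain ⟨hy0, hy1⟩ := hy
  rcases lt_or_eq_of_le hy1 with hlt | rfl
  · exact mainIneq hα0 hα1 hy0.le hlt
  · rcases eq_or_lt_of_le hα0 with rfl | hαpos
    · norm_num
    · rw [show (1:ℝ) - 1 = 0 by norm_num, Real.zero_rpow (ne_of_gt hαpos)]
      have hb := T2 hα0 hα1 (y := 1) (by norm_num)
      nlinarith [hb, mul_nonneg (sq_nonneg (1-α)) (by linarith : (0:ℝ) ≤ 2-α)]
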